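/- Let A be a two-block SBM adjacency matrix with parameters (N, p). Then for all indices i and j lying in different communities, E[(A²)_{ij}] = 2(N−1)p(1−p) and E[((A²)_{ij})²] = 2(N−1)p(1−p) + 2(N−1)(2N−3)p²(1−p)². -/

import Mathlib

open MeasureTheory ProbabilityTheory Matrix

/-- `i` and `j` lie in the same community, where the communities of `Fin (2*N)` are
`{0, …, N-1}` and `{N, …, 2N-1}`. -/
def sameCom (N : ℕ) (i j : Fin (2 * N)) : Prop := ((i : ℕ) < N ↔ (j : ℕ) < N)

instance (N : ℕ) (i j : Fin (2 * N)) : Decidable (sameCom N i j) := by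
  unfold sameCom; infer_instance

/-- The Bernoulli distribution on `ℝ` with success probability `q`:
mass `q` at `1` and mass `1 - q` at `0`. -/
noncomputable def bernoulliReal (q : ℝ) : Measure ℝ :=
  ENNReal.ofReal q • Measure.dirac (1 : ℝ) + ENNReal.ofReal (1 - q) • Measure.dirac (0 : ℝ)

/-- `A` is a two-block SBM adjacency matrix with parameters `(N, p)` under the measure `μ`. -/
structure IsSBM {Ω : Type*} [MeasurableSpace Ω] (μ : Measure Ω) (N : ℕ) (p : ℝ)
    (A : Ω → Matrix (Fin (2 * N)) (Fin (2 * N)) ℝ) : Prop where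
  isProb : IsProbabilityMeasure μ
  symm : ∀ ω, (A ω)ᵀ = A ω
  diag : ∀ ω i, A ω i i = 0
  vals : ∀ ω i j, A ω i j = 0 ∨ A ω i j = 1
  meas : ∀ i j, Measurable fun ω => A ω i j
  indep : iIndepFun
    (fun (e : {e : Fin (2 * N) × Fin (2 * N) // e.1 < e.2}) ω => A ω e.1.1 e.1.2) μ
  bern : ∀ i j, i < j →
    μ.map (fun ω => A ω i j) = bernoulliReal (if sameCom N i j then p else 1 - p)

/- Auxiliary lemmas -/

lemma integrable_dirac' {f : ℝ → ℝ} (hf : Measurable f) (a : ℝ) :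
    Integrable f (Measure.dirac a) := by
  refine ⟨hf.aestronglyMeasurable, ?_⟩
  unfold HasFiniteIntegral
  rw [lintegral_dirac' _ hf.enorm]
  exact enorm_lt_top

lemma bern_integral (q : ℝ) (hq0 : 0 ≤ q) :
    ∫ x, x ∂ bernoulliReal q = q := by
  unfold bernoulliReal
  rw [show (fun x : ℝ => x) = id from rfl] at *
  rw [integral_add_measure
    ((integrable_dirac' measurable_id _).smul_measure ENNReal.ofReal_ne_top)
    ((integrable_dirac' measurable_id _).smul_measure ENNReal.ofReal_ne_top),
    integral_smul_measure, integral_smul_measure, integral_dirac, integral_dirac]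
  simp [ENNReal.toReal_ofReal, hq0]

def edge {N : ℕ} (a b : Fin (2 * N)) (h : a ≠ b) :
    {e : Fin (2 * N) × Fin (2 * N) // e.1 < e.2} :=
  if hab : a < b then ⟨(a, b), hab⟩ else ⟨(b, a), h.lt_or_gt.resolve_left hab⟩

lemma edge_eval {N : ℕ} {A : Matrix (Fin (2 * N)) (Fin (2 * N)) ℝ} (hs : Aᵀ = A)
    (a b : Fin (2 * N)) (h : a ≠ b) :
    A (edge a b h).1.1 (edge a b h).1.2 = A a b := by
  unfold edge; split_ifs with hab
  · rfl
  · conv_rhs => rw [← hs]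
    rw [Matrix.transpose_apply]

lemma edge_sameCom {N : ℕ} (a b : Fin (2 * N)) (h : a ≠ b) :
    sameCom N (edge a b h).1.1 (edge a b h).1.2 ↔ sameCom N a b := by
  unfold edge sameCom; split_ifs with hab
  · rfl
  · exact iff_comm

lemma edge_inj {N : ℕ} {a b c d : Fin (2 * N)} {h1 : a ≠ b} {h2 : c ≠ d}
    (he : edge a b h1 = edge c d h2) : (a = c ∧ b = d) ∨ (a = d ∧ b = c) := by
  unfold edge at he
  split_ifs at he <;> simp [Subtype.ext_iff, Prod.ext_iff] at he <;> tauto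

theorem stmt11 {Ω : Type*} [MeasurableSpace Ω] (μ : Measure Ω) (N : ℕ) (hN : 1 ≤ N)
    (p : ℝ) (hp : 1 / 2 < p) (hp1 : p ≤ 1)
    (A : Ω → Matrix (Fin (2 * N)) (Fin (2 * N)) ℝ) (hA : IsSBM μ N p A)
    (i j : Fin (2 * N)) (hcom : ¬ sameCom N i j) :
    (∫ ω, ((A ω) ^ 2) i j ∂μ) = 2 * ((N : ℝ) - 1) * p * (1 - p) ∧
    (∫ ω, (((A ω) ^ 2) i j) ^ 2 ∂μ) =
      2 * ((N : ℝ) - 1) * p * (1 - p)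
        + 2 * ((N : ℝ) - 1) * (2 * N - 3) * p ^ 2 * (1 - p) ^ 2 := by
  obtain ⟨hProb, hsymm, hdiag, hvals, hmeas, hindep, hbern⟩ := hA
  haveI := hProb
  have hij : i ≠ j := by rintro rfl; exact hcom Iff.rfl
  have h01 : ∀ ω a b, 0 ≤ A ω a b ∧ A ω a b ≤ 1 := by
    intro ω a b; rcases hvals ω a b with h | h <;> simp [h]
  -- integrability of bounded measurable functions
  have hbd : ∀ f : Ω → ℝ, Measurable f → (∀ ω, 0 ≤ f ω ∧ f ω ≤ 1) → Integrable f μ := by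
    intro f hf hb
    refine Integrable.mono' (integrable_const 1) hf.aestronglyMeasurable ?_
    filter_upwards with ω
    rw [Real.norm_eq_abs, abs_of_nonneg (hb ω).1]; exact (hb ω).2
  have hint1 : ∀ a b, Integrable (fun ω => A ω a b) μ :=
    fun a b => hbd _ (hmeas a b) (fun ω => h01 ω a b)
  have hint2 : ∀ a b c d, Integrable (fun ω => A ω a b * A ω c d) μ := by
    intro a b c d
    refine hbd _ ((hmeas a b).mul (hmeas c d)) fun ω => ?_
    constructor
    · exact mul_nonneg (h01 ω a b).1 (h01 ω c d).1
    · exact mul_le_one₀ (h01 ω a b).2 (h01 ω c d).1 (h01 ω c d).2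
  have hint4 : ∀ a b c d e f g h,
      Integrable (fun ω => A ω a b * A ω c d * (A ω e f * A ω g h)) μ := by
    intro a b c d e f g h
    refine hbd _ (((hmeas a b).mul (hmeas c d)).mul ((hmeas e f).mul (hmeas g h)))
      fun ω => ?_
    have m1 := mul_nonneg (h01 ω a b).1 (h01 ω c d).1
    have m2 := mul_nonneg (h01 ω e f).1 (h01 ω g h).1
    have u1 := mul_le_one₀ (h01 ω a b).2 (h01 ω c d).1 (h01 ω c d).2
    have u2 := mul_le_one₀ (h01 ω e f).2 (h01 ω g h).1 (h01 ω g h).2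
    exact ⟨mul_nonneg m1 m2, mul_le_one₀ u1 m2 u2⟩
  have hsym : ∀ ω a b, A ω a b = A ω b a := by
    intro ω a b
    conv_lhs => rw [← hsymm ω]
    rw [Matrix.transpose_apply]
  -- expectation of a single entry
  have hexpE : ∀ (a b : Fin (2 * N)), a < b →
      ∫ ω, A ω a b ∂μ = if sameCom N a b then p else 1 - p := by
    intro a b hab
    rw [show (∫ ω, A ω a b ∂μ) = ∫ x, x ∂ (μ.map fun ω => A ω a b) from
      (integral_map (hmeas a b).aemeasurable aestronglyMeasurable_id).symm,
      hbern a b hab]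
    split_ifs with h
    · exact bern_integral p (by linarith)
    · exact bern_integral (1 - p) (by linarith)
  have hexp : ∀ (a b : Fin (2 * N)) (h : a ≠ b),
      ∫ ω, A ω (edge a b h).1.1 (edge a b h).1.2 ∂μ
        = if sameCom N a b then p else 1 - p := by
    intro a b h
    rw [hexpE _ _ (edge a b h).2]
    exact if_congr (edge_sameCom a b h) rfl rfl
  -- measurability of edge variables
  have hXmeas : ∀ e : {e : Fin (2 * N) × Fin (2 * N) // e.1 < e.2},
      Measurable fun ω => A ω e.1.1 e.1.2 := fun e => hmeas _ _
  have hpair : ∀ k : Fin (2 * N),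
      (if sameCom N i k then p else 1 - p) * (if sameCom N k j then p else 1 - p)
        = p * (1 - p) := by
    intro k
    by_cases h1 : sameCom N i k <;> by_cases h2 : sameCom N k j <;>
      simp only [h1, h2, if_true, if_false] <;>
      first | (exfalso; unfold sameCom at hcom h1 h2; tauto) | ring
  -- product rule: two off-diagonal terms
  have hterm1 : ∀ k : Fin (2 * N), k ≠ i → k ≠ j →
      ∫ ω, A ω i k * A ω k j ∂μ = p * (1 - p) := by
    intro k hki hkj
    have h1 : i ≠ k := hki.symm
    have h2 : k ≠ j := hkj
    have hne : edge i k h1 ≠ edge k j h2 := by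
      intro he; rcases edge_inj he with ⟨h, h'⟩ | ⟨h, h'⟩
      · exact hkj h'
      · exact hij h
    have heq : (fun ω => A ω i k * A ω k j)
        = fun ω => A ω (edge i k h1).1.1 (edge i k h1).1.2
            * A ω (edge k j h2).1.1 (edge k j h2).1.2 := by
      funext ω; rw [edge_eval (hsymm ω), edge_eval (hsymm ω)]
    rw [heq]
    show integral μ ((fun ω => A ω (edge i k h1).1.1 (edge i k h1).1.2)
        * fun ω => A ω (edge k j h2).1.1 (edge k j h2).1.2) = p * (1 - p)
    rw [(hindep.indepFun hne).integral_mul_eq_mul_integral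
        (hbd _ (hXmeas _) fun ω => h01 ω _ _).aestronglyMeasurable (hbd _ (hXmeas _) fun ω => h01 ω _ _).aestronglyMeasurable,
      hexp i k h1, hexp k j h2]
    exact hpair k
  -- product rule: four off-diagonal terms
  have hterm2 : ∀ k l : Fin (2 * N), k ≠ i → k ≠ j → l ≠ i → l ≠ j → k ≠ l →
      ∫ ω, A ω i k * A ω k j * (A ω i l * A ω l j) ∂μ = (p * (1 - p)) ^ 2 := by
    intro k l hki hkj hli hlj hkl
    have h1 : i ≠ k := hki.symm
    have h2 : k ≠ j := hkj
    have h3 : i ≠ l := hli.symm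
    have h4 : l ≠ j := hlj
    have hne13 : edge i k h1 ≠ edge i l h3 := by
      intro he; rcases edge_inj he with ⟨h, h'⟩ | ⟨h, h'⟩
      · exact hkl h'
      · exact hki h'
    have hne14 : edge i k h1 ≠ edge l j h4 := by
      intro he; rcases edge_inj he with ⟨h, h'⟩ | ⟨h, h'⟩
      · exact hkj h'
      · exact hij h
    have hne23 : edge k j h2 ≠ edge i l h3 := by
      intro he; rcases edge_inj he with ⟨h, h'⟩ | ⟨h, h'⟩
      · exact hki h
      · exact hkl h
    have hne24 : edge k j h2 ≠ edge l j h4 := by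
      intro he; rcases edge_inj he with ⟨h, h'⟩ | ⟨h, h'⟩
      · exact hkl h
      · exact hkj h
    have hIndep := hindep.indepFun_mul_mul hXmeas
      (edge i k h1) (edge k j h2) (edge i l h3) (edge l j h4) hne13 hne14 hne23 hne24
    have heq : (fun ω => A ω i k * A ω k j * (A ω i l * A ω l j))
        = ((fun ω => A ω (edge i k h1).1.1 (edge i k h1).1.2)
            * (fun ω => A ω (edge k j h2).1.1 (edge k j h2).1.2))
          * ((fun ω => A ω (edge i l h3).1.1 (edge i l h3).1.2)
            * (fun ω => A ω (edge l j h4).1.1 (edge l j h4).1.2)) := by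
      funext ω
      simp only [Pi.mul_apply]
      rw [edge_eval (hsymm ω), edge_eval (hsymm ω), edge_eval (hsymm ω), edge_eval (hsymm ω)]
    have hintE : ∀ e f : {e : Fin (2 * N) × Fin (2 * N) // e.1 < e.2},
        Integrable ((fun ω => A ω e.1.1 e.1.2) * fun ω => A ω f.1.1 f.1.2) μ := by
      intro e f
      have := hint2 e.1.1 e.1.2 f.1.1 f.1.2
      exact this
    rw [heq]
    show integral μ (((fun ω => A ω (edge i k h1).1.1 (edge i k h1).1.2)
            * fun ω => A ω (edge k j h2).1.1 (edge k j h2).1.2)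
          * ((fun ω => A ω (edge i l h3).1.1 (edge i l h3).1.2)
            * fun ω => A ω (edge l j h4).1.1 (edge l j h4).1.2)) = (p * (1 - p)) ^ 2
    rw [hIndep.integral_mul_eq_mul_integral (hintE _ _).aestronglyMeasurable (hintE _ _).aestronglyMeasurable]
    -- reduce each pair via independence again
    have hne12 : edge i k h1 ≠ edge k j h2 := by
      intro he; rcases edge_inj he with ⟨h, h'⟩ | ⟨h, h'⟩
      · exact hkj h'
      · exact hij h
    have hne34 : edge i l h3 ≠ edge l j h4 := by
      intro he; rcases edge_inj he with ⟨h, h'⟩ | ⟨h, h'⟩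
      · exact hlj h'
      · exact hij h
    rw [(hindep.indepFun hne12).integral_mul_eq_mul_integral
        (hbd _ (hXmeas _) fun ω => h01 ω _ _).aestronglyMeasurable (hbd _ (hXmeas _) fun ω => h01 ω _ _).aestronglyMeasurable,
      (hindep.indepFun hne34).integral_mul_eq_mul_integral
        (hbd _ (hXmeas _) fun ω => h01 ω _ _).aestronglyMeasurable (hbd _ (hXmeas _) fun ω => h01 ω _ _).aestronglyMeasurable,
      hexp i k h1, hexp k j h2, hexp i l h3, hexp l j h4,
      hpair k, hpair l]
    ring
  -- the set S of summation indices
  set S : Finset (Fin (2 * N)) := Finset.univ \ {i, j} with hS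
  have hScard : (S.card : ℝ) = 2 * (N : ℝ) - 2 := by
    have hsub : ({i, j} : Finset (Fin (2 * N))) ⊆ Finset.univ := Finset.subset_univ _
    have hc2 : ({i, j} : Finset (Fin (2 * N))).card = 2 := by
      rw [Finset.card_insert_of_notMem (by simp [hij]), Finset.card_singleton]
    have h2N : 2 ≤ 2 * N := by omega
    rw [hS, Finset.card_sdiff_of_subset hsub, hc2, Finset.card_univ, Fintype.card_fin]
    push_cast [Nat.cast_sub h2N]
    ring
  -- per-k values of the first-moment terms
  have hval1 : ∀ k : Fin (2 * N),
      ∫ ω, A ω i k * A ω k j ∂μ = if k ∈ S then p * (1 - p) else 0 := by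
    intro k
    by_cases hk : k ∈ S
    · have hki : k ≠ i := by simp [hS] at hk; tauto
      have hkj : k ≠ j := by simp [hS] at hk; tauto
      rw [if_pos hk]; exact hterm1 k hki hkj
    · rw [if_neg hk]
      have : k = i ∨ k = j := by simp [hS] at hk; tauto
      rcases this with rfl | rfl
      · simp [hdiag]
      · simp [hdiag]
  -- FIRST MOMENT
  have hfirst : (∫ ω, ((A ω) ^ 2) i j ∂μ) = 2 * ((N : ℝ) - 1) * p * (1 - p) := by
    have hrw : ∀ ω, ((A ω) ^ 2) i j = ∑ k, A ω i k * A ω k j := by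
      intro ω; rw [sq, Matrix.mul_apply]
    simp only [hrw]
    rw [integral_finset_sum _ fun k _ => hint2 i k k j]
    simp only [hval1]
    rw [Finset.sum_ite_mem, Finset.univ_inter, Finset.sum_const, nsmul_eq_mul, hScard]
    ring
  refine ⟨hfirst, ?_⟩
  -- SECOND MOMENT
  have hrw2 : ∀ ω, (((A ω) ^ 2) i j) ^ 2
      = ∑ k, ∑ l, A ω i k * A ω k j * (A ω i l * A ω l j) := by
    intro ω
    rw [sq, sq, Matrix.mul_apply, Finset.sum_mul_sum]
  simp only [hrw2]
  rw [integral_finset_sum _ fun k _ => integrable_finset_sum _ fun l _ => hint4 _ _ _ _ _ _ _ _]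
  have hswap : ∀ k : Fin (2 * N),
      ∫ ω, (∑ l, A ω i k * A ω k j * (A ω i l * A ω l j)) ∂μ
        = ∑ l, ∫ ω, A ω i k * A ω k j * (A ω i l * A ω l j) ∂μ :=
    fun k => integral_finset_sum _ fun l _ => hint4 _ _ _ _ _ _ _ _
  simp only [hswap]
  -- value of each term
  have hval2 : ∀ k l : Fin (2 * N),
      ∫ ω, A ω i k * A ω k j * (A ω i l * A ω l j) ∂μ
        = if k ∈ S ∧ l ∈ S then (if k = l then p * (1 - p) else (p * (1 - p)) ^ 2) else 0 := by
    intro k l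
    by_cases hk : k ∈ S
    · by_cases hl : l ∈ S
      · have hki : k ≠ i := by simp [hS] at hk; tauto
        have hkj : k ≠ j := by simp [hS] at hk; tauto
        have hli : l ≠ i := by simp [hS] at hl; tauto
        have hlj : l ≠ j := by simp [hS] at hl; tauto
        rw [if_pos ⟨hk, hl⟩]
        by_cases hkl : k = l
        · subst hkl
          rw [if_pos rfl]
          have hsq : ∀ ω, A ω i k * A ω k j * (A ω i k * A ω k j) = A ω i k * A ω k j := by
            intro ω
            rcases hvals ω i k with h | h <;> rcases hvals ω k j with h' | h' <;>
              simp [h, h']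
          simp only [hsq]
          exact hterm1 k hki hkj
        · rw [if_neg hkl]
          exact hterm2 k l hki hkj hli hlj hkl
      · rw [if_neg (by tauto)]
        have : l = i ∨ l = j := by simp [hS] at hl; tauto
        rcases this with rfl | rfl
        · simp [hdiag]
        · simp [hdiag]
    · rw [if_neg (by tauto)]
      have : k = i ∨ k = j := by simp [hS] at hk; tauto
      rcases this with rfl | rfl
      · simp [hdiag]
      · simp [hdiag]
  simp only [hval2]
  -- compute the double sum
  have hsum : (∑ k : Fin (2 * N), ∑ l : Fin (2 * N),
      if k ∈ S ∧ l ∈ S then (if k = l then p * (1 - p) else (p * (1 - p)) ^ 2) else 0)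
      = (S.card : ℝ) * (p * (1 - p))
        + (S.card : ℝ) * ((S.card : ℝ) - 1) * (p * (1 - p)) ^ 2 := by
    have hinner : ∀ k ∈ S, (∑ l : Fin (2 * N),
        if k ∈ S ∧ l ∈ S then (if k = l then p * (1 - p) else (p * (1 - p)) ^ 2) else 0)
        = (p * (1 - p)) + ((S.card : ℝ) - 1) * (p * (1 - p)) ^ 2 := by
      intro k hk
      have hsplit : ∀ l : Fin (2 * N),
          (if k ∈ S ∧ l ∈ S then (if k = l then p * (1 - p) else (p * (1 - p)) ^ 2) else 0)
          = (if l ∈ S then (p * (1 - p)) ^ 2 else 0)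
            + (if l = k then (if l ∈ S then (p * (1 - p) - (p * (1 - p)) ^ 2) else 0) else 0) := by
        intro l
        by_cases hl : l ∈ S <;> by_cases hkl : k = l <;>
          simp [hl, hkl, hk, eq_comm] <;> ring
      simp only [hsplit]
      rw [Finset.sum_add_distrib, Finset.sum_ite_mem, Finset.univ_inter, Finset.sum_const,
        nsmul_eq_mul, Finset.sum_ite_eq']
      simp only [Finset.mem_univ, if_true, hk, if_pos]
      ring
    have houter : ∀ k : Fin (2 * N), (∑ l : Fin (2 * N),
        if k ∈ S ∧ l ∈ S then (if k = l then p * (1 - p) else (p * (1 - p)) ^ 2) else 0)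
        = if k ∈ S then ((p * (1 - p)) + ((S.card : ℝ) - 1) * (p * (1 - p)) ^ 2) else 0 := by
      intro k
      by_cases hk : k ∈ S
      · rw [if_pos hk]; exact hinner k hk
      · simp [hk]
    simp only [houter]
    rw [Finset.sum_ite_mem, Finset.univ_inter, Finset.sum_const, nsmul_eq_mul]
    ring
  rw [hsum, hScard]
  push_cast
  ring
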